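/- (Robbins–Siegmund) Let (z_t), (η_t), (γ_t), (ψ_t) be nonnegative stochastic processes adapted to a filtration (F_t) satisfying E[z_{t+1} | F_t] ≤ (1 + η_t) z_t + γ_t − ψ_t almost surely for all t. Then on the event Ω₀ = {∑_t η_t < ∞ and ∑_t γ_t < ∞}, almost surely lim_{t→∞} z_t exists and is finite, and ∑_t ψ_t < ∞. -/

import Mathlib

open MeasureTheory Filter Topology

section RSdefs

variable {Ω : Type*}

/-- Product `∏_{s<t} (1+η_s)`. -/
noncomputable def rsP (η : ℕ → Ω → ℝ) (t : ℕ) (ω : Ω) : ℝ :=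
  ∏ s ∈ Finset.range t, (1 + η s ω)

/-- Indicator that partial sums of `η+γ` up to `s` stay below `N`. -/
noncomputable def rsC (η γ : ℕ → Ω → ℝ) (N : ℕ) (s : ℕ) (ω : Ω) : ℝ :=
  if (∑ u ∈ Finset.range (s + 1), (η u ω + γ u ω)) ≤ (N : ℝ) then 1 else 0

/-- Increment of the compensated process. -/
noncomputable def rsD (z η γ ψ : ℕ → Ω → ℝ) (s : ℕ) (ω : Ω) : ℝ :=
  z (s + 1) ω / rsP η (s + 1) ω - z s ω / rsP η s ω
    + (ψ s ω - γ s ω) / rsP η (s + 1) ω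

/-- Stopped compensated process. -/
noncomputable def rsY (z η γ ψ : ℕ → Ω → ℝ) (N : ℕ) (t : ℕ) (ω : Ω) : ℝ :=
  z 0 ω + ∑ s ∈ Finset.range t, rsC η γ N s ω * rsD z η γ ψ s ω

/-- Unstopped compensated process. -/
noncomputable def rsX (z η γ ψ : ℕ → Ω → ℝ) (t : ℕ) (ω : Ω) : ℝ :=
  z t ω / rsP η t ω + ∑ s ∈ Finset.range t, (ψ s ω - γ s ω) / rsP η (s + 1) ω

variable {z η γ ψ : ℕ → Ω → ℝ}

lemma rsP_succ (t : ℕ) (ω : Ω) : rsP η (t + 1) ω = rsP η t ω * (1 + η t ω) :=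
  Finset.prod_range_succ _ _

lemma rsP_one_le (hη : ∀ t ω, 0 ≤ η t ω) (t : ℕ) (ω : Ω) : 1 ≤ rsP η t ω := by
  unfold rsP
  calc (1:ℝ) = ∏ _s ∈ Finset.range t, (1:ℝ) := by simp
    _ ≤ ∏ s ∈ Finset.range t, (1 + η s ω) :=
        Finset.prod_le_prod (fun _ _ => zero_le_one) (fun s _ => by linarith [hη s ω])

lemma rsP_pos (hη : ∀ t ω, 0 ≤ η t ω) (t : ℕ) (ω : Ω) : 0 < rsP η t ω :=
  lt_of_lt_of_le one_pos (rsP_one_le hη t ω)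

lemma rsP_le_exp (hη : ∀ t ω, 0 ≤ η t ω) (t : ℕ) (ω : Ω) :
    rsP η t ω ≤ Real.exp (∑ s ∈ Finset.range t, η s ω) := by
  rw [Real.exp_sum]
  exact Finset.prod_le_prod (fun s _ => by linarith [hη s ω])
    (fun s _ => by linarith [Real.add_one_le_exp (η s ω)])

lemma rsC_eq_one {N s : ℕ} {ω : Ω}
    (h : (∑ u ∈ Finset.range (s + 1), (η u ω + γ u ω)) ≤ (N : ℝ)) :
    rsC η γ N s ω = 1 := if_pos h

lemma rsC_cond {N s : ℕ} {ω : Ω} (h : rsC η γ N s ω = 1) :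
    (∑ u ∈ Finset.range (s + 1), (η u ω + γ u ω)) ≤ (N : ℝ) := by
  by_contra hc
  simp only [rsC, if_neg hc] at h
  norm_num at h

lemma rsX_succ (t : ℕ) (ω : Ω) :
    rsX z η γ ψ (t + 1) ω = rsX z η γ ψ t ω + rsD z η γ ψ t ω := by
  simp only [rsX, rsD, Finset.sum_range_succ]
  ring

lemma rsY_succ (N t : ℕ) (ω : Ω) :
    rsY z η γ ψ N (t + 1) ω
      = rsY z η γ ψ N t ω + rsC η γ N t ω * rsD z η γ ψ t ω := by
  simp only [rsY, Finset.sum_range_succ]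
  ring

lemma rsY_eq_rsX {N t : ℕ} {ω : Ω} (h : ∀ s < t, rsC η γ N s ω = 1) :
    rsY z η γ ψ N t ω = rsX z η γ ψ t ω := by
  induction t with
  | zero => simp [rsY, rsX, rsP]
  | succ t ih =>
    rw [rsY_succ, rsX_succ, ih fun s hs => h s (hs.trans (Nat.lt_succ_self t)),
      h t (Nat.lt_succ_self t), one_mul]

lemma rsY_ge (hz : ∀ t ω, 0 ≤ z t ω) (hη : ∀ t ω, 0 ≤ η t ω)
    (hγ : ∀ t ω, 0 ≤ γ t ω) (hψ : ∀ t ω, 0 ≤ ψ t ω) (N t : ℕ) (ω : Ω) :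
    -(N : ℝ) ≤ rsY z η γ ψ N t ω := by
  induction t with
  | zero =>
    simp only [rsY, Finset.range_zero, Finset.sum_empty, add_zero]
    exact le_trans (neg_nonpos.2 (Nat.cast_nonneg N)) (hz 0 ω)
  | succ t ih =>
    by_cases hc : (∑ u ∈ Finset.range (t + 1), (η u ω + γ u ω)) ≤ (N : ℝ)
    · have hall : ∀ s < t + 1, rsC η γ N s ω = 1 := by
        intro s hs
        refine rsC_eq_one (le_trans ?_ hc)
        refine Finset.sum_le_sum_of_subset_of_nonneg ?_ ?_
        · exact Finset.range_subset_range.2 hs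
        · intro u _ _
          have := hη u ω; have := hγ u ω; linarith
      rw [rsY_eq_rsX hall]
      have h1 : ∀ s ∈ Finset.range (t + 1),
          -(γ s ω) ≤ (ψ s ω - γ s ω) / rsP η (s + 1) ω := by
        intro s _
        have hP1 := rsP_one_le hη (s + 1) ω
        have hPpos := rsP_pos hη (s + 1) ω
        have h2 : -(γ s ω) / rsP η (s + 1) ω ≤ (ψ s ω - γ s ω) / rsP η (s + 1) ω := by
          gcongr
          · linarith [hψ s ω]
        have h3 : γ s ω / rsP η (s + 1) ω ≤ γ s ω := div_le_self (hγ s ω) hP1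
        have h4 : -(γ s ω) / rsP η (s + 1) ω = -(γ s ω / rsP η (s + 1) ω) := by ring
        linarith
      have hzP : 0 ≤ z (t + 1) ω / rsP η (t + 1) ω :=
        div_nonneg (hz _ _) (rsP_pos hη _ _).le
      have h2 := Finset.sum_le_sum h1
      have h3 : ∑ s ∈ Finset.range (t + 1), γ s ω
          ≤ ∑ u ∈ Finset.range (t + 1), (η u ω + γ u ω) :=
        Finset.sum_le_sum fun s _ => by linarith [hη s ω]
      have h4 : ∑ s ∈ Finset.range (t + 1), -(γ s ω)
          = -∑ s ∈ Finset.range (t + 1), γ s ω := by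
        simp
      rw [h4] at h2
      unfold rsX
      linarith
    · rw [rsY_succ]
      have : rsC η γ N t ω = 0 := if_neg hc
      rw [this, zero_mul, add_zero]
      exact ih

end RSdefs

theorem stmt_2 {Ω : Type*} {m0 : MeasurableSpace Ω} {μ : Measure Ω}
    [IsProbabilityMeasure μ] (F : Filtration ℕ m0)
    (z η γ ψ : ℕ → Ω → ℝ)
    (hz_adapted : Adapted F z) (hη_adapted : Adapted F η)
    (hγ_adapted : Adapted F γ) (hψ_adapted : Adapted F ψ)
    (hz_nonneg : ∀ t ω, 0 ≤ z t ω) (hη_nonneg : ∀ t ω, 0 ≤ η t ω)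
    (hγ_nonneg : ∀ t ω, 0 ≤ γ t ω) (hψ_nonneg : ∀ t ω, 0 ≤ ψ t ω)
    (hz_int : ∀ t, Integrable (z t) μ)
    (hineq : ∀ t, μ[z (t + 1) | F t] ≤ᵐ[μ]
        fun ω => (1 + η t ω) * z t ω + γ t ω - ψ t ω) :
    ∀ᵐ ω ∂μ, (Summable (fun t => η t ω) ∧ Summable (fun t => γ t ω)) →
      (∃ c : ℝ, Tendsto (fun t => z t ω) atTop (nhds c)) ∧
        Summable (fun t => ψ t ω) := by
  -- measurability helpers
  have hmz : ∀ s i, s ≤ i → Measurable[F i] (z s) :=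
    fun s i h => ((hz_adapted s).mono (F.mono h) le_rfl)
  have hmη : ∀ s i, s ≤ i → Measurable[F i] (η s) :=
    fun s i h => ((hη_adapted s).mono (F.mono h) le_rfl)
  have hmγ : ∀ s i, s ≤ i → Measurable[F i] (γ s) :=
    fun s i h => ((hγ_adapted s).mono (F.mono h) le_rfl)
  have hmψ : ∀ s i, s ≤ i → Measurable[F i] (ψ s) :=
    fun s i h => ((hψ_adapted s).mono (F.mono h) le_rfl)
  have hmP : ∀ t i, t ≤ i + 1 → Measurable[F i] (rsP η t) := by
    intro t i ht
    unfold rsP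
    refine Finset.measurable_prod _ ?_
    intro s hs
    have : s ≤ i := by
      simp only [Finset.mem_range] at hs; omega
    exact measurable_const.add (hmη s i this)
  have hmC : ∀ N s, Measurable[F s] (rsC η γ N s) := by
    intro N s
    unfold rsC
    refine Measurable.ite ?_ measurable_const measurable_const
    refine measurableSet_le ?_ measurable_const
    refine Finset.measurable_sum _ ?_
    intro u hu
    have : u ≤ s := by simp only [Finset.mem_range] at hu; omega
    exact (hmη u s this).add (hmγ u s this)
  have hmD : ∀ s, Measurable[F (s + 1)] (rsD z η γ ψ s) := by
    intro s
    unfold rsD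
    exact ((hmz (s+1) (s+1) le_rfl).div (hmP (s+1) (s+1) (by omega))).sub
        ((hmz s (s+1) (by omega)).div (hmP s (s+1) (by omega))) |>.add
      (((hmψ s (s+1) (by omega)).sub (hmγ s (s+1) (by omega))).div
        (hmP (s+1) (s+1) (by omega)))
  have hmT : ∀ N s, Measurable[F (s + 1)]
      (fun ω => rsC η γ N s ω * rsD z η γ ψ s ω) :=
    fun N s => ((hmC N s).mono (F.mono (Nat.le_succ s)) (le_refl _)).mul (hmD s)
  -- a.e. bound on ψ
  have hψ_bd : ∀ s, ∀ᵐ ω ∂μ, ψ s ω ≤ (1 + η s ω) * z s ω + γ s ω := by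
    intro s
    have h0 : 0 ≤ᵐ[μ] μ[z (s + 1)|F s] :=
      condExp_nonneg (Filter.Eventually.of_forall (hz_nonneg (s + 1)))
    filter_upwards [h0, hineq s] with ω h1 h2
    simp only [Pi.zero_apply] at h1
    linarith
  have hterm_le : ∀ (N s : ℕ) (ω : Ω), rsC η γ N s ω = 1 →
      η s ω ≤ (N : ℝ) ∧ γ s ω ≤ (N : ℝ) := by
    intro N s ω h
    have hc := rsC_cond h
    have hmem : s ∈ Finset.range (s + 1) := by simp
    have hsingle : η s ω + γ s ω ≤ ∑ u ∈ Finset.range (s + 1), (η u ω + γ u ω) :=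
      Finset.single_le_sum (f := fun u => η u ω + γ u ω)
        (fun u _ => add_nonneg (hη_nonneg u ω) (hγ_nonneg u ω)) hmem
    constructor <;> linarith [hη_nonneg s ω, hγ_nonneg s ω]
  -- bound on the increments
  have hT_bd : ∀ N s, ∀ᵐ ω ∂μ, ‖rsC η γ N s ω * rsD z η γ ψ s ω‖ ≤
      z (s + 1) ω + ((2 : ℝ) + N) * z s ω + 2 * N := by
    intro N s
    filter_upwards [hψ_bd s] with ω hψb
    by_cases hcond : (∑ u ∈ Finset.range (s + 1), (η u ω + γ u ω)) ≤ (N : ℝ)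
    · have h1 : rsC η γ N s ω = 1 := rsC_eq_one hcond
      obtain ⟨hηN, hγN⟩ := hterm_le N s ω h1
      rw [h1, one_mul]
      unfold rsD
      have hP1 := rsP_one_le hη_nonneg (s + 1) ω
      have hP1' := rsP_one_le hη_nonneg s ω
      have e1 : z (s + 1) ω / rsP η (s + 1) ω ≤ z (s + 1) ω :=
        div_le_self (hz_nonneg _ _) hP1
      have e1' : 0 ≤ z (s + 1) ω / rsP η (s + 1) ω :=
        div_nonneg (hz_nonneg _ _) (by linarith)
      have e2 : z s ω / rsP η s ω ≤ z s ω := div_le_self (hz_nonneg _ _) hP1'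
      have e2' : 0 ≤ z s ω / rsP η s ω := div_nonneg (hz_nonneg _ _) (by linarith)
      have key : |(ψ s ω - γ s ω) / rsP η (s + 1) ω| ≤ ψ s ω + γ s ω := by
        rw [abs_div, abs_of_nonneg (by linarith : (0:ℝ) ≤ rsP η (s + 1) ω)]
        refine le_trans (div_le_self (abs_nonneg _) hP1) ?_
        rcases abs_cases (ψ s ω - γ s ω) with ⟨h, _⟩ | ⟨h, _⟩ <;>
          linarith [hψ_nonneg s ω, hγ_nonneg s ω]
      obtain ⟨key1, key2⟩ := abs_le.1 key
      have hmul : η s ω * z s ω ≤ (N : ℝ) * z s ω :=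
        mul_le_mul_of_nonneg_right hηN (hz_nonneg s ω)
      rw [Real.norm_eq_abs, abs_le]
      constructor <;> [skip; skip] <;>
        nlinarith [hz_nonneg s ω, hz_nonneg (s+1) ω, hη_nonneg s ω]
    · have h0 : rsC η γ N s ω = 0 := if_neg hcond
      rw [h0, zero_mul, norm_zero]
      have := hz_nonneg s ω
      have := hz_nonneg (s + 1) ω
      positivity
  have hT_int : ∀ N s, Integrable (fun ω => rsC η γ N s ω * rsD z η γ ψ s ω) μ := by
    intro N s
    refine Integrable.mono' ?_ ?_ (hT_bd N s)
    · exact ((hz_int (s + 1)).add ((hz_int s).const_mul _)).add (integrable_const _)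
    · exact ((hmT N s).stronglyMeasurable.mono (F.le (s + 1))).aestronglyMeasurable
  -- Y is adapted and integrable
  have hY_adapted : ∀ N, StronglyAdapted F (rsY z η γ ψ N) := by
    intro N t
    refine Measurable.stronglyMeasurable ?_
    unfold rsY
    refine (hmz 0 t (Nat.zero_le t)).add ?_
    refine Finset.measurable_sum _ ?_
    intro s hs
    have hst : s + 1 ≤ t := by simp only [Finset.mem_range] at hs; omega
    exact ((hmT N s).mono (F.mono hst) (le_refl _))
  have hY_int : ∀ N t, Integrable (rsY z η γ ψ N t) μ := by
    intro N t
    unfold rsY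
    exact (hz_int 0).add (integrable_finset_sum _ fun s _ => hT_int N s)
  have hY_super : ∀ N, Supermartingale (rsY z η γ ψ N) F μ := by
    intro N
    refine supermartingale_nat (hY_adapted N) (hY_int N) ?_
    intro t
    set f : Ω → ℝ := fun ω => rsC η γ N t ω / rsP η (t + 1) ω with hfdef
    set g : Ω → ℝ := fun ω => rsC η γ N t ω *
      (-(z t ω) / rsP η t ω + (ψ t ω - γ t ω) / rsP η (t + 1) ω) with hgdef
    have hYfun : rsY z η γ ψ N (t + 1) = rsY z η γ ψ N t + (f * z (t + 1) + g) := by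
      funext ω
      rw [rsY_succ]
      simp only [Pi.add_apply, Pi.mul_apply, hfdef, hgdef]
      unfold rsD
      ring
    have hf_nonneg : ∀ ω, 0 ≤ f ω := by
      intro ω
      have : 0 ≤ rsC η γ N t ω := by unfold rsC; split <;> norm_num
      exact div_nonneg this (rsP_pos hη_nonneg (t + 1) ω).le
    have hf_le_one : ∀ ω, f ω ≤ 1 := by
      intro ω
      have h1 : rsC η γ N t ω ≤ 1 := by unfold rsC; split <;> norm_num
      have h0 : 0 ≤ rsC η γ N t ω := by unfold rsC; split <;> norm_num
      calc f ω ≤ rsC η γ N t ω := div_le_self h0 (rsP_one_le hη_nonneg _ ω)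
        _ ≤ 1 := h1
    have hf_meas : StronglyMeasurable[F t] f :=
      ((hmC N t).div (hmP (t + 1) t le_rfl)).stronglyMeasurable
    have hfz_int : Integrable (f * z (t + 1)) μ := by
      refine Integrable.mono' (hz_int (t + 1)) ?_ ?_
      · exact Measurable.aestronglyMeasurable <|
          ((hf_meas.measurable.mono (F.le t) (le_refl _)).mul
            ((hmz (t+1) (t+1) le_rfl).mono (F.le (t+1)) (le_refl _)))
      · refine Filter.Eventually.of_forall fun ω => ?_
        rw [Pi.mul_apply, Real.norm_eq_abs, abs_mul,
          abs_of_nonneg (hf_nonneg ω), abs_of_nonneg (hz_nonneg _ _)]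
        calc f ω * z (t + 1) ω ≤ 1 * z (t + 1) ω :=
              mul_le_mul_of_nonneg_right (hf_le_one ω) (hz_nonneg _ _)
          _ = z (t + 1) ω := one_mul _
    have hg_int : Integrable g μ := by
      have heq : g = (fun ω => rsC η γ N t ω * rsD z η γ ψ t ω) - f * z (t + 1) := by
        funext ω
        simp only [Pi.sub_apply, Pi.mul_apply, hfdef, hgdef]
        unfold rsD
        ring
      rw [heq]
      exact (hT_int N t).sub hfz_int
    have hg_meas : StronglyMeasurable[F t] g := by
      refine Measurable.stronglyMeasurable ?_
      exact (hmC N t).mul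
        (((hmz t t le_rfl).neg.div (hmP t t (by omega))).add
          (((hmψ t t le_rfl).sub (hmγ t t le_rfl)).div (hmP (t + 1) t le_rfl)))
    rw [hYfun]
    have step1 : μ[rsY z η γ ψ N t + (f * z (t + 1) + g)|F t]
        =ᵐ[μ] μ[rsY z η γ ψ N t|F t] + μ[f * z (t + 1) + g|F t] :=
      condExp_add (hY_int N t) (hfz_int.add hg_int) (F t)
    have step2 : μ[f * z (t + 1) + g|F t] =ᵐ[μ] μ[f * z (t + 1)|F t] + μ[g|F t] :=
      condExp_add hfz_int hg_int (F t)
    have step3 : μ[f * z (t + 1)|F t] =ᵐ[μ] f * μ[z (t + 1)|F t] :=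
      condExp_mul_of_stronglyMeasurable_left hf_meas hfz_int (hz_int (t + 1))
    have step4 : μ[g|F t] = g :=
      condExp_of_stronglyMeasurable (F.le t) hg_meas hg_int
    have step5 : μ[rsY z η γ ψ N t|F t] = rsY z η γ ψ N t :=
      condExp_of_stronglyMeasurable (F.le t) (hY_adapted N t) (hY_int N t)
    filter_upwards [step1, step2, step3, hineq t] with ω h1 h2 h3 h4
    rw [h1, Pi.add_apply, h2, Pi.add_apply, h3, Pi.mul_apply, step4, step5]
    have hmul : f ω * (μ[z (t + 1)|F t]) ω ≤
        f ω * ((1 + η t ω) * z t ω + γ t ω - ψ t ω) :=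
      mul_le_mul_of_nonneg_left h4 (hf_nonneg ω)
    have hzero : f ω * ((1 + η t ω) * z t ω + γ t ω - ψ t ω) + g ω = 0 := by
      simp only [hfdef, hgdef]
      rw [rsP_succ]
      have hP : rsP η t ω ≠ 0 := (rsP_pos hη_nonneg t ω).ne'
      have h1η : (1 : ℝ) + η t ω ≠ 0 := by linarith [hη_nonneg t ω]
      field_simp
      ring
    linarith
  -- a.e. convergence of all Y N
  have hconv : ∀ᵐ ω ∂μ, ∀ N : ℕ, ∃ c : ℝ,
      Tendsto (fun t => rsY z η γ ψ N t ω) atTop (𝓝 c) := by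
    rw [ae_all_iff]
    intro N
    set R : NNReal := (∫ ω, z 0 ω ∂μ + 2 * N).toNNReal with hR
    have hbdd : ∀ n, eLpNorm ((-(rsY z η γ ψ N)) n) 1 μ ≤ (R : ENNReal) := by
      intro n
      refine le_trans (le_of_eq (eLpNorm_neg (rsY z η γ ψ N n) 1 μ)) ?_
      have hmono : ∫ ω, ‖rsY z η γ ψ N n ω‖ ∂μ ≤ ∫ ω, z 0 ω ∂μ + 2 * N := by
        have hub : ∀ ω, ‖rsY z η γ ψ N n ω‖ ≤ rsY z η γ ψ N n ω + 2 * N := by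
          intro ω
          have hge := rsY_ge hz_nonneg hη_nonneg hγ_nonneg hψ_nonneg N n ω
          rw [Real.norm_eq_abs]
          rcases abs_cases (rsY z η γ ψ N n ω) with ⟨h, _⟩ | ⟨h, _⟩ <;>
            [linarith [Nat.cast_nonneg (α := ℝ) N]; linarith]
        have h1 : ∫ ω, ‖rsY z η γ ψ N n ω‖ ∂μ ≤ ∫ ω, (rsY z η γ ψ N n ω + 2 * N) ∂μ :=
          integral_mono (hY_int N n).norm ((hY_int N n).add (integrable_const _)) hub
        have h2 : ∫ ω, (rsY z η γ ψ N n ω + 2 * N) ∂μ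
            = ∫ ω, rsY z η γ ψ N n ω ∂μ + 2 * N := by
          rw [integral_add (hY_int N n) (integrable_const _), integral_const]
          simp [measure_univ]
        have h3 : ∫ ω, rsY z η γ ψ N n ω ∂μ ≤ ∫ ω, rsY z η γ ψ N 0 ω ∂μ := by
          have hle := (hY_super N).2.1 0 n (Nat.zero_le n)
          calc ∫ ω, rsY z η γ ψ N n ω ∂μ
              = ∫ ω, (μ[rsY z η γ ψ N n|F 0]) ω ∂μ := (integral_condExp (F.le 0)).symm
            _ ≤ ∫ ω, rsY z η γ ψ N 0 ω ∂μ :=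
                integral_mono_ae integrable_condExp (hY_int N 0) hle
        have h4 : ∫ ω, rsY z η γ ψ N 0 ω ∂μ = ∫ ω, z 0 ω ∂μ := by
          refine integral_congr_ae (Filter.Eventually.of_forall fun ω => ?_)
          simp [rsY]
        linarith
      calc eLpNorm (rsY z η γ ψ N n) 1 μ
          = ∫⁻ ω, ‖rsY z η γ ψ N n ω‖ₑ ∂μ := eLpNorm_one_eq_lintegral_enorm
        _ = ENNReal.ofReal (∫ ω, ‖rsY z η γ ψ N n ω‖ ∂μ) :=
            (ofReal_integral_norm_eq_lintegral_enorm (hY_int N n)).symm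
        _ ≤ ENNReal.ofReal (∫ ω, z 0 ω ∂μ + 2 * N) := ENNReal.ofReal_le_ofReal hmono
        _ = (R : ENNReal) := rfl
    have hsub : Submartingale (-(rsY z η γ ψ N)) F μ := (hY_super N).neg
    filter_upwards [hsub.exists_ae_tendsto_of_bdd hbdd] with ω hω
    obtain ⟨c, hc⟩ := hω
    refine ⟨-c, ?_⟩
    have : Tendsto (fun n => -((-(rsY z η γ ψ N)) n ω)) atTop (𝓝 (-c)) := hc.neg
    simpa using this
  -- pointwise conclusion
  filter_upwards [hconv] with ω hω
  rintro ⟨hηs, hγs⟩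
  have hsum : Summable (fun t => η t ω + γ t ω) := hηs.add hγs
  set N : ℕ := ⌈∑' t, (η t ω + γ t ω)⌉₊ with hN
  have hc1 : ∀ s, rsC η γ N s ω = 1 := by
    intro s
    refine rsC_eq_one (le_trans ?_ (Nat.le_ceil _))
    exact Summable.sum_le_tsum _ (fun u _ => by linarith [hη_nonneg u ω, hγ_nonneg u ω]) hsum
  obtain ⟨c, hc⟩ := hω N
  have hXc : Tendsto (fun t => rsX z η γ ψ t ω) atTop (𝓝 c) :=
    hc.congr fun t => rsY_eq_rsX fun s _ => hc1 s
  -- convergence of P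
  have hPmono : Monotone (fun t => rsP η t ω) := by
    refine monotone_nat_of_le_succ fun t => ?_
    rw [rsP_succ]
    nlinarith [rsP_pos hη_nonneg t ω, hη_nonneg t ω]
  have hPbdd : BddAbove (Set.range fun t => rsP η t ω) := by
    refine ⟨Real.exp (∑' s, η s ω), ?_⟩
    rintro x ⟨t, rfl⟩
    exact (rsP_le_exp hη_nonneg t ω).trans (Real.exp_le_exp.2
      (Summable.sum_le_tsum _ (fun u _ => hη_nonneg u ω) hηs))
  have hPtend : Tendsto (fun t => rsP η t ω) atTop (𝓝 (⨆ t, rsP η t ω)) :=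
    tendsto_atTop_ciSup hPmono hPbdd
  -- the γ-compensator converges
  have hGsum : Summable (fun s => γ s ω / rsP η (s + 1) ω) :=
    Summable.of_nonneg_of_le
      (fun s => div_nonneg (hγ_nonneg s ω) (rsP_pos hη_nonneg _ _).le)
      (fun s => div_le_self (hγ_nonneg s ω) (rsP_one_le hη_nonneg _ _)) hγs
  have hGtend := hGsum.hasSum.tendsto_sum_nat
  have hA : Tendsto (fun t => z t ω / rsP η t ω
      + ∑ s ∈ Finset.range t, ψ s ω / rsP η (s + 1) ω) atTop
      (𝓝 (c + ∑' s, γ s ω / rsP η (s + 1) ω)) := by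
    refine (hXc.add hGtend).congr fun t => ?_
    unfold rsX
    rw [add_assoc, ← Finset.sum_add_distrib]
    congr 1
    refine Finset.sum_congr rfl fun s _ => ?_
    rw [← add_div, sub_add_cancel]
  obtain ⟨B, hB⟩ := hA.bddAbove_range
  have hΨle : ∀ n, ∑ s ∈ Finset.range n, ψ s ω / rsP η (s + 1) ω ≤ B := by
    intro n
    have h1 : 0 ≤ z n ω / rsP η n ω :=
      div_nonneg (hz_nonneg n ω) (rsP_pos hη_nonneg n ω).le
    have h2 := hB (Set.mem_range_self (f := fun t => z t ω / rsP η t ω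
      + ∑ s ∈ Finset.range t, ψ s ω / rsP η (s + 1) ω) n)
    linarith
  have hΨsum : Summable (fun s => ψ s ω / rsP η (s + 1) ω) :=
    summable_of_sum_range_le
      (fun s => div_nonneg (hψ_nonneg s ω) (rsP_pos hη_nonneg _ _).le) hΨle
  have hψsum : Summable (fun s => ψ s ω) := by
    refine Summable.of_nonneg_of_le (fun s => hψ_nonneg s ω) (fun s => ?_)
      (hΨsum.mul_left (Real.exp (∑' u, η u ω)))
    have hPpos := rsP_pos hη_nonneg (s + 1) ω
    have hPC : rsP η (s + 1) ω ≤ Real.exp (∑' u, η u ω) :=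
      (rsP_le_exp hη_nonneg (s + 1) ω).trans (Real.exp_le_exp.2
        (Summable.sum_le_tsum _ (fun u _ => hη_nonneg u ω) hηs))
    calc ψ s ω = ψ s ω / rsP η (s + 1) ω * rsP η (s + 1) ω :=
          (div_mul_cancel₀ _ hPpos.ne').symm
      _ ≤ ψ s ω / rsP η (s + 1) ω * Real.exp (∑' u, η u ω) :=
          mul_le_mul_of_nonneg_left hPC (div_nonneg (hψ_nonneg s ω) hPpos.le)
      _ = Real.exp (∑' u, η u ω) * (ψ s ω / rsP η (s + 1) ω) := mul_comm _ _
  refine ⟨?_, hψsum⟩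
  have hΨtend := hΨsum.hasSum.tendsto_sum_nat
  have hzPtend : Tendsto (fun t => z t ω / rsP η t ω) atTop
      (𝓝 (c + (∑' s, γ s ω / rsP η (s + 1) ω) - ∑' s, ψ s ω / rsP η (s + 1) ω)) := by
    refine (hA.sub hΨtend).congr fun t => ?_
    ring
  have hztend : Tendsto (fun t => z t ω) atTop
      (𝓝 ((c + (∑' s, γ s ω / rsP η (s + 1) ω) - ∑' s, ψ s ω / rsP η (s + 1) ω)
        * ⨆ t, rsP η t ω)) := by
    refine (hzPtend.mul hPtend).congr fun t => ?_
    exact div_mul_cancel₀ (z t ω) (rsP_pos hη_nonneg t ω).ne'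
  exact ⟨_, hztend⟩
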